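/- Let α ∈ (0,1), let m ≥ 1 be an integer, let β > 0, and let e ∈ ℝ^m with each e_i ∈ {0, β}; set k := #{i : e_i = β}. Then there exists a nonzero vector χ ∈ [0,1]^m that is relaxed self-consistent with respect to e_1, …, e_m at level α if and only if α β k ≥ m (equivalently, k ≥ 1 and β ≥ m/(αk)). -/
import Mathlib


/-- Feasibility check for relaxed self-consistency: if the e-values take only the values
`0` and `β > 0` and `k` is the number of e-values equal to `β`, then a nonzero relaxed
self-consistent vector `χ ∈ [0,1]^m` exists iff `α β k ≥ m`. -/
theorem stmt_13 (α : ℝ) (hα : α ∈ Set.Ioo (0 : ℝ) 1) (m : ℕ) (hm : 1 ≤ m)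
    (β : ℝ) (hβ : 0 < β) (e : Fin m → ℝ) (he : ∀ i, e i = 0 ∨ e i = β)
    (k : ℕ) (hk : k = (Finset.univ.filter fun i => e i = β).card) :
    (∃ χ : Fin m → ℝ, χ ≠ 0 ∧ (∀ i, χ i ∈ Set.Icc (0 : ℝ) 1) ∧
        ∀ i, χ i ≤ α * e i / m * ∑ j, χ j) ↔ (m : ℝ) ≤ α * β * k := by
  obtain ⟨hα0, hα1⟩ := hα
  have hm0 : (0 : ℝ) < m := by exact_mod_cast hm
  have hβ0 : (0:ℝ) ≠ β := Ne.symm (ne_of_gt hβ)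
  have hsum_e : ∑ i, e i = β * k := by
    have h1 : ∑ i, e i = ∑ i, (if e i = β then β else 0) := by
      apply Finset.sum_congr rfl
      intro i _
      rcases he i with h | h <;> simp [h, hβ0]
    rw [h1, ← Finset.sum_filter, Finset.sum_const, hk]
    simp [mul_comm]
  constructor
  · rintro ⟨χ, hne, hIcc, hsc⟩
    set S := ∑ j, χ j with hS
    have hS0 : 0 < S := by
      obtain ⟨i, hi⟩ := Function.ne_iff.mp hne
      have hi0 : 0 < χ i := lt_of_le_of_ne (hIcc i).1 (Ne.symm hi)
      calc (0:ℝ) < χ i := hi0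
        _ ≤ S := Finset.single_le_sum (fun j _ => (hIcc j).1) (Finset.mem_univ i)
    have hsum : S ≤ α * (β * k) / m * S := by
      calc S = ∑ i, χ i := rfl
        _ ≤ ∑ i, α * e i / m * S :=
            Finset.sum_le_sum fun i _ => hsc i
        _ = α * (∑ i, e i) / m * S := by
            rw [← Finset.sum_mul, ← Finset.sum_div, ← Finset.mul_sum]
        _ = α * (β * k) / m * S := by rw [hsum_e]
    have h1 : (1:ℝ) ≤ α * (β * k) / m := by
      by_contra h
      push_neg at h
      nlinarith
    have h2 : (m:ℝ) ≤ α * (β * k) := by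
      rw [le_div_iff₀ hm0] at h1; linarith
    linarith [mul_assoc α β (k:ℝ)]
  · intro hmk
    have hkpos : 0 < k := by
      by_contra h
      push_neg at h
      interval_cases k
      simp at hmk
      nlinarith
    have hsumχ : ∑ j, (if e j = β then (1:ℝ) else 0) = k := by
      rw [← Finset.sum_filter, Finset.sum_const, hk]
      simp
    refine ⟨fun i => if e i = β then 1 else 0, ?_, ?_, ?_⟩
    · obtain ⟨i, hi⟩ : ∃ i, e i = β := by
        by_contra h
        push_neg at h
        have : (Finset.univ.filter fun i => e i = β) = ∅ := by
          apply Finset.filter_eq_empty_iff.mpr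
          intro i _; exact h i
        rw [this] at hk; simp at hk; omega
      intro h
      have := congrFun h i
      simp [hi] at this
    · intro i; by_cases h : e i = β <;> simp [h]
    · intro i
      simp only
      rw [hsumχ]
      rcases he i with h | h
      · simp [h, hβ0]
      · rw [h, if_pos rfl, div_mul_eq_mul_div, le_div_iff₀ hm0]
        linarith
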